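/- arXiv:1403.6329 — 3 statements merged into one kernel-verified Lean document; each statement's English description precedes it below -/
import Mathlib

section
/- If events B and C are independent (with 0 < P(B) < 1 and 0 < P(C) < 1), and P(A|B∩C) > P(A|Bᶜ∩C) and P(A|B∩Cᶜ) > P(A|Bᶜ∩Cᶜ), then P(A|B) > P(A|Bᶜ). In other words, Simpson's paradox cannot occur when B and C are independent. -/
open MeasureTheory

/-- The conditional probability `P(A | B) = P(A ∩ B) / P(B)` (as a real number). -/
noncomputable def condProb {Ω : Type*} [MeasurableSpace Ω] (μ : Measure Ω)
    (A B : Set Ω) : ℝ :=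
  (μ (A ∩ B)).toReal / (μ B).toReal

/-- Simpson's paradox cannot occur when `B` and `C` are independent: if
`P(B∩C) = P(B)P(C)`, `0 < P(B) < 1`, `0 < P(C) < 1`, all four intersections
`B∩C, B∩Cᶜ, Bᶜ∩C, Bᶜ∩Cᶜ` have positive probability, and
`P(A|B∩C) > P(A|Bᶜ∩C)` and `P(A|B∩Cᶜ) > P(A|Bᶜ∩Cᶜ)`, then `P(A|B) > P(A|Bᶜ)`. -/
theorem no_simpson_of_indep {Ω : Type*} [MeasurableSpace Ω] (μ : Measure Ω)
    [IsProbabilityMeasure μ] (A B C : Set Ω)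
    (hA : MeasurableSet A) (hB : MeasurableSet B) (hC : MeasurableSet C)
    (hindep : μ (B ∩ C) = μ B * μ C)
    (hB0 : 0 < μ B) (hB1 : μ B < 1) (hC0 : 0 < μ C) (hC1 : μ C < 1)
    (h1 : 0 < μ (B ∩ C)) (h2 : 0 < μ (B ∩ Cᶜ))
    (h3 : 0 < μ (Bᶜ ∩ C)) (h4 : 0 < μ (Bᶜ ∩ Cᶜ))
    (hc1 : condProb μ A (B ∩ C) > condProb μ A (Bᶜ ∩ C))
    (hc2 : condProb μ A (B ∩ Cᶜ) > condProb μ A (Bᶜ ∩ Cᶜ)) :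
    condProb μ A B > condProb μ A Bᶜ := by
  classical
  have hfin : ∀ s : Set Ω, μ s ≠ ⊤ := fun s => measure_ne_top μ s
  have key : ∀ s : Set Ω, μ (s ∩ C) + μ (s ∩ Cᶜ) = μ s := fun s => by
    rw [← Set.diff_eq]; exact measure_inter_add_diff s hC
  have keyB : ∀ s : Set Ω, μ (s ∩ B) + μ (s ∩ Bᶜ) = μ s := fun s => by
    rw [← Set.diff_eq]; exact measure_inter_add_diff s hB
  have hCsum : μ C + μ Cᶜ = 1 := by
    rw [measure_add_measure_compl hC, measure_univ]
  have hBsum : μ B + μ Bᶜ = 1 := by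
    rw [measure_add_measure_compl hB, measure_univ]
  -- product formulas in ENNReal
  have hBCc : μ (B ∩ Cᶜ) = μ B * μ Cᶜ := by
    have hsplit : μ B * μ C + μ B * μ Cᶜ = μ B := by rw [← mul_add, hCsum, mul_one]
    have h : μ B * μ C + μ (B ∩ Cᶜ) = μ B * μ C + μ B * μ Cᶜ := by
      rw [hsplit, ← hindep, key B]
    exact (ENNReal.add_right_inj (by finiteness)).mp h
  have hBcC : μ (Bᶜ ∩ C) = μ Bᶜ * μ C := by
    have hsplit : μ B * μ C + μ Bᶜ * μ C = μ C := by rw [← add_mul, hBsum, one_mul]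
    have h : μ B * μ C + μ (Bᶜ ∩ C) = μ B * μ C + μ Bᶜ * μ C := by
      rw [hsplit, ← hindep, Set.inter_comm B C, Set.inter_comm Bᶜ C, keyB C]
    exact (ENNReal.add_right_inj (by finiteness)).mp h
  have hBcCc : μ (Bᶜ ∩ Cᶜ) = μ Bᶜ * μ Cᶜ := by
    have hsplit : μ Bᶜ * μ C + μ Bᶜ * μ Cᶜ = μ Bᶜ := by rw [← mul_add, hCsum, mul_one]
    have h : μ Bᶜ * μ C + μ (Bᶜ ∩ Cᶜ) = μ Bᶜ * μ C + μ Bᶜ * μ Cᶜ := by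
      rw [hsplit, ← hBcC, key Bᶜ]
    exact (ENNReal.add_right_inj (by finiteness)).mp h
  -- real quantities
  set b := (μ B).toReal with hbdef
  set c := (μ C).toReal with hcdef
  have hb0 : 0 < b := ENNReal.toReal_pos hB0.ne' (hfin B)
  have hc0 : 0 < c := ENNReal.toReal_pos hC0.ne' (hfin C)
  have hb1 : b < 1 := by
    have := ENNReal.toReal_lt_toReal (hfin B) (by norm_num : (1:ENNReal) ≠ ⊤) |>.mpr hB1
    simpa using this
  have hc1' : c < 1 := by
    have := ENNReal.toReal_lt_toReal (hfin C) (by norm_num : (1:ENNReal) ≠ ⊤) |>.mpr hC1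
    simpa using this
  have hBc : (μ Bᶜ).toReal = 1 - b := by
    rw [measure_compl hB (hfin B), measure_univ, ENNReal.toReal_sub_of_le hB1.le (by norm_num)]
    simp [hbdef]
  have hCc : (μ Cᶜ).toReal = 1 - c := by
    rw [measure_compl hC (hfin C), measure_univ, ENNReal.toReal_sub_of_le hC1.le (by norm_num)]
    simp [hcdef]
  have rBC : (μ (B ∩ C)).toReal = b * c := by rw [hindep, ENNReal.toReal_mul]
  have rBCc : (μ (B ∩ Cᶜ)).toReal = b * (1 - c) := by rw [hBCc, ENNReal.toReal_mul, hCc]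
  have rBcC : (μ (Bᶜ ∩ C)).toReal = (1 - b) * c := by rw [hBcC, ENNReal.toReal_mul, hBc]
  have rBcCc : (μ (Bᶜ ∩ Cᶜ)).toReal = (1 - b) * (1 - c) := by
    rw [hBcCc, ENNReal.toReal_mul, hBc, hCc]
  -- decompositions of A ∩ B and A ∩ Bᶜ
  have decomp : ∀ s : Set Ω, (μ (A ∩ s)).toReal
      = (μ (A ∩ (s ∩ C))).toReal + (μ (A ∩ (s ∩ Cᶜ))).toReal := fun s => by
    rw [← ENNReal.toReal_add (hfin _) (hfin _), ← Set.inter_assoc, ← Set.inter_assoc, key (A ∩ s)]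
  set x₁ := (μ (A ∩ (B ∩ C))).toReal
  set x₂ := (μ (A ∩ (B ∩ Cᶜ))).toReal
  set y₁ := (μ (A ∩ (Bᶜ ∩ C))).toReal
  set y₂ := (μ (A ∩ (Bᶜ ∩ Cᶜ))).toReal
  have hAB : (μ (A ∩ B)).toReal = x₁ + x₂ := decomp B
  have hABc : (μ (A ∩ Bᶜ)).toReal = y₁ + y₂ := decomp Bᶜ
  unfold condProb at hc1 hc2 ⊢
  rw [hAB, hABc, hBc]
  rw [rBC, rBcC] at hc1
  rw [rBCc, rBcCc] at hc2
  have hb1' : 0 < 1 - b := by linarith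
  have hc1'' : 0 < 1 - c := by linarith
  rw [gt_iff_lt, div_lt_div_iff₀ (mul_pos hb1' hc0) (mul_pos hb0 hc0)] at hc1
  rw [gt_iff_lt, div_lt_div_iff₀ (mul_pos hb1' hc1'') (mul_pos hb0 hc1'')] at hc2
  rw [gt_iff_lt, div_lt_div_iff₀ hb1' hb0]
  have e1 : y₁ * b < x₁ * (1 - b) := by nlinarith
  have e2 : y₂ * b < x₂ * (1 - b) := by nlinarith
  nlinarith
end

section
/- If events B and C are independent and C and Bᶜ are independent, with all four intersections B∩C, B∩Cᶜ, Bᶜ∩C, Bᶜ∩Cᶜ of positive probability, and P(A|B∩C) ≥ P(A|Bᶜ∩C) and P(A|B∩Cᶜ) ≥ P(A|Bᶜ∩Cᶜ) with at least one inequality strict, then P(A|B) > P(A|Bᶜ). -/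
open MeasureTheory

lemma condProb_decomp {Ω : Type*} [MeasurableSpace Ω] (μ : Measure Ω)
    [IsProbabilityMeasure μ] (A B C : Set Ω) (hC : MeasurableSet C)
    (hindep : μ (B ∩ C) = μ B * μ C)
    (h1 : 0 < μ (B ∩ C)) (h2 : 0 < μ (B ∩ Cᶜ)) :
    condProb μ A B = condProb μ A (B ∩ C) * (μ C).toReal
      + condProb μ A (B ∩ Cᶜ) * (1 - (μ C).toReal) := by
  have hBsum : μ (B ∩ C) + μ (B ∩ Cᶜ) = μ B := by
    have := measure_inter_add_diff (μ := μ) B hC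
    rwa [Set.diff_eq] at this
  have hAsum : μ (A ∩ (B ∩ C)) + μ (A ∩ (B ∩ Cᶜ)) = μ (A ∩ B) := by
    have := measure_inter_add_diff (μ := μ) (A ∩ B) hC
    rwa [Set.diff_eq, Set.inter_assoc, Set.inter_assoc] at this
  have fBC : μ (B ∩ C) ≠ ⊤ := measure_ne_top μ _
  have fBCc : μ (B ∩ Cᶜ) ≠ ⊤ := measure_ne_top μ _
  set aBC := (μ (A ∩ (B ∩ C))).toReal with haBC
  set aBCc := (μ (A ∩ (B ∩ Cᶜ))).toReal with haBCc
  set b := (μ B).toReal with hb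
  set c := (μ C).toReal with hc
  have hbc : (μ (B ∩ C)).toReal = b * c := by rw [hindep, ENNReal.toReal_mul]
  have hbcc : (μ (B ∩ Cᶜ)).toReal = b - b * c := by
    have := congrArg ENNReal.toReal hBsum
    rw [ENNReal.toReal_add fBC fBCc, hbc] at this
    linarith
  have haB : (μ (A ∩ B)).toReal = aBC + aBCc := by
    rw [← hAsum, ENNReal.toReal_add (measure_ne_top μ _) (measure_ne_top μ _)]
  have hbcpos : 0 < b * c := by
    rw [← hbc]; exact ENNReal.toReal_pos h1.ne' fBC
  have hbccpos : 0 < b - b * c := by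
    rw [← hbcc]; exact ENNReal.toReal_pos h2.ne' fBCc
  have hbpos : 0 < b := by nlinarith
  have hcpos : 0 < c := by nlinarith
  have hcne : (1 : ℝ) - c ≠ 0 := by nlinarith
  unfold condProb
  rw [haB, hbc, hbcc]
  have : b - b * c = b * (1 - c) := by ring
  rw [this]
  field_simp
  rw [← hb, ← haBC, ← haBCc]
  exact mul_div_cancel_right₀ _ hbpos.ne'

/-- Strengthened non-reversal statement: if `B` and `C` are independent and `Bᶜ` and `C`
are independent, all four intersections have positive probability,
`P(A|B∩C) ≥ P(A|Bᶜ∩C)` and `P(A|B∩Cᶜ) ≥ P(A|Bᶜ∩Cᶜ)` with at least one inequality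
strict, then `P(A|B) > P(A|Bᶜ)`. -/
theorem no_simpson_of_indep_strict {Ω : Type*} [MeasurableSpace Ω] (μ : Measure Ω)
    [IsProbabilityMeasure μ] (A B C : Set Ω)
    (hA : MeasurableSet A) (hB : MeasurableSet B) (hC : MeasurableSet C)
    (hindep : μ (B ∩ C) = μ B * μ C)
    (hindep' : μ (Bᶜ ∩ C) = μ Bᶜ * μ C)
    (h1 : 0 < μ (B ∩ C)) (h2 : 0 < μ (B ∩ Cᶜ))
    (h3 : 0 < μ (Bᶜ ∩ C)) (h4 : 0 < μ (Bᶜ ∩ Cᶜ))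
    (hc1 : condProb μ A (B ∩ C) ≥ condProb μ A (Bᶜ ∩ C))
    (hc2 : condProb μ A (B ∩ Cᶜ) ≥ condProb μ A (Bᶜ ∩ Cᶜ))
    (hstrict : condProb μ A (B ∩ C) > condProb μ A (Bᶜ ∩ C) ∨
               condProb μ A (B ∩ Cᶜ) > condProb μ A (Bᶜ ∩ Cᶜ)) :
    condProb μ A B > condProb μ A Bᶜ := by
  rw [condProb_decomp μ A B C hC hindep h1 h2,
      condProb_decomp μ A Bᶜ C hC hindep' h3 h4]
  have hcpos : 0 < (μ C).toReal := by
    have fBC : μ (B ∩ C) ≠ ⊤ := measure_ne_top μ _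
    have := ENNReal.toReal_pos h1.ne' fBC
    rw [hindep, ENNReal.toReal_mul] at this
    nlinarith [ENNReal.toReal_nonneg (a := μ B), ENNReal.toReal_nonneg (a := μ C)]
  have hcpos' : 0 < 1 - (μ C).toReal := by
    have hBsum : μ (B ∩ C) + μ (B ∩ Cᶜ) = μ B := by
      have := measure_inter_add_diff (μ := μ) B hC
      rwa [Set.diff_eq] at this
    have fBC : μ (B ∩ C) ≠ ⊤ := measure_ne_top μ _
    have fBCc : μ (B ∩ Cᶜ) ≠ ⊤ := measure_ne_top μ _
    have h2r := ENNReal.toReal_pos h2.ne' fBCc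
    have := congrArg ENNReal.toReal hBsum
    rw [ENNReal.toReal_add fBC fBCc, hindep, ENNReal.toReal_mul] at this
    have hble : (μ B).toReal ≤ 1 := by
      have := prob_le_one (μ := μ) (s := B)
      simpa using ENNReal.toReal_le_of_le_ofReal (by norm_num) (by simpa using this)
    nlinarith [ENNReal.toReal_nonneg (a := μ B), ENNReal.toReal_nonneg (a := μ C)]
  rcases hstrict with h | h
  · have := mul_lt_mul_of_pos_right h hcpos
    have h2' := mul_le_mul_of_nonneg_right hc2 hcpos'.le
    linarith
  · have := mul_lt_mul_of_pos_right h hcpos'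
    have h1' := mul_le_mul_of_nonneg_right hc1 hcpos.le
    linarith
end

section
/- For discrete random variables X, Y, W with W independent of X: if P(Y ≤ y | X = x, W = w) is nonincreasing in x for all y and w, then P(Y ≤ y | X = x) is nonincreasing in x for all y. (No Simpson's paradox / effect reversal under W ⊥ X.) -/
open Classical Finset

/-- Probability of a set of outcomes in a finite probability space with weights `p`. -/
noncomputable def Pr {Ω : Type*} [Fintype Ω] (p : Ω → ℝ) (S : Set Ω) : ℝ :=
  ∑ ω, if ω ∈ S then p ω else 0

/-- Conditional probability `P(A | B) = P(A ∩ B)/P(B)` in a finite probability space. -/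
noncomputable def CPr {Ω : Type*} [Fintype Ω] (p : Ω → ℝ) (A B : Set Ω) : ℝ :=
  Pr p (A ∩ B) / Pr p B

lemma Pr_pos_of_nonempty {Ω : Type*} [Fintype Ω] (p : Ω → ℝ) (hp : ∀ ω, 0 < p ω)
    {S : Set Ω} (h : S.Nonempty) : 0 < Pr p S := by
  obtain ⟨ω₀, hω₀⟩ := h
  apply Finset.sum_pos'
  · intro ω _; split
    · exact (hp ω).le
    · exact le_rfl
  · exact ⟨ω₀, Finset.mem_univ _, by rw [if_pos hω₀]; exact hp ω₀⟩

lemma Pr_nonneg' {Ω : Type*} [Fintype Ω] (p : Ω → ℝ) (hp : ∀ ω, 0 < p ω)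
    (S : Set Ω) : 0 ≤ Pr p S := by
  apply Finset.sum_nonneg
  intro ω _; split
  · exact (hp ω).le
  · exact le_rfl

lemma Pr_decomp {Ω : Type*} [Fintype Ω] (p : Ω → ℝ) (A : Set Ω) (X W : Ω → ℝ) (x : ℝ) :
    Pr p (A ∩ {ω | X ω = x}) =
      ∑ w ∈ Finset.image W Finset.univ, Pr p (A ∩ {ω | X ω = x ∧ W ω = w}) := by
  unfold Pr
  rw [Finset.sum_comm]
  apply Finset.sum_congr rfl
  intro ω _
  by_cases hA : ω ∈ A ∧ X ω = x
  · rw [if_pos (Set.mem_inter hA.1 hA.2)]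
    rw [Finset.sum_eq_single_of_mem (W ω) (Finset.mem_image_of_mem W (Finset.mem_univ ω))]
    · rw [if_pos (Set.mem_inter hA.1 (show X ω = x ∧ W ω = W ω from ⟨hA.2, rfl⟩))]
    · intro b _ hb; rw [if_neg]; rintro ⟨-, -, h⟩; exact hb h.symm
  · rw [if_neg (fun h => hA ⟨h.1, h.2⟩), Finset.sum_eq_zero]
    intro b _; rw [if_neg]; rintro ⟨h1, h2, -⟩; exact hA ⟨h1, h2⟩

/-- Discrete Cox–Wermuth condition for avoiding effect reversal after marginalization:
for discrete random variables `X, Y, W` with `W` independent of `X`, if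
`P(Y ≤ y | X = x, W = w)` is nonincreasing in `x` for all `y` and `w`, then
`P(Y ≤ y | X = x)` is nonincreasing in `x` for all `y`. -/
theorem no_effect_reversal_of_indep {Ω : Type*} [Fintype Ω] (p : Ω → ℝ)
    (hp : ∀ ω, 0 < p ω) (hsum : ∑ ω, p ω = 1)
    (X Y W : Ω → ℝ)
    (hindep : ∀ w x, Pr p {ω | W ω = w ∧ X ω = x}
      = Pr p {ω | W ω = w} * Pr p {ω | X ω = x})
    (hmono : ∀ y w x₁ x₂, x₁ ≤ x₂ →
      0 < Pr p {ω | X ω = x₁ ∧ W ω = w} → 0 < Pr p {ω | X ω = x₂ ∧ W ω = w} →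
      CPr p {ω | Y ω ≤ y} {ω | X ω = x₂ ∧ W ω = w} ≤
        CPr p {ω | Y ω ≤ y} {ω | X ω = x₁ ∧ W ω = w}) :
    ∀ y x₁ x₂, x₁ ≤ x₂ →
      0 < Pr p {ω | X ω = x₁} → 0 < Pr p {ω | X ω = x₂} →
      CPr p {ω | Y ω ≤ y} {ω | X ω = x₂} ≤ CPr p {ω | Y ω ≤ y} {ω | X ω = x₁} := by
  intro y x₁ x₂ hx h1 h2
  set A : Set Ω := {ω | Y ω ≤ y}
  -- Pr {X = x ∧ W = w} = Pr {W=w} * Pr {X=x}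
  have hswap : ∀ w x, Pr p {ω | X ω = x ∧ W ω = w} = Pr p {ω | W ω = w} * Pr p {ω | X ω = x} := by
    intro w x
    rw [show {ω | X ω = x ∧ W ω = w} = {ω | W ω = w ∧ X ω = x} from by ext ω; exact and_comm]
    exact hindep w x
  have hWpos : ∀ w ∈ Finset.image W Finset.univ, 0 < Pr p {ω | W ω = w} := by
    intro w hw
    obtain ⟨ω₀, _, rfl⟩ := Finset.mem_image.mp hw
    exact Pr_pos_of_nonempty p hp ⟨ω₀, rfl⟩
  -- key identity: CPr p A {X = x} = ∑ w, CPr p A {X=x ∧ W=w} * Pr {W=w}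
  have key : ∀ x, 0 < Pr p {ω | X ω = x} →
      CPr p A {ω | X ω = x} =
        ∑ w ∈ Finset.image W Finset.univ,
          CPr p A {ω | X ω = x ∧ W ω = w} * Pr p {ω | W ω = w} := by
    intro x hx'
    unfold CPr
    rw [Pr_decomp p A X W x]
    rw [Finset.sum_div]
    apply Finset.sum_congr rfl
    intro w hw
    have hd : Pr p {ω | X ω = x ∧ W ω = w} = Pr p {ω | W ω = w} * Pr p {ω | X ω = x} :=
      hswap w x
    have hdpos : 0 < Pr p {ω | X ω = x ∧ W ω = w} := by
      rw [hd]; exact mul_pos (hWpos w hw) hx'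
    have hWne : Pr p {ω | W ω = w} ≠ 0 := (hWpos w hw).ne'
    have hXne : Pr p {ω | X ω = x} ≠ 0 := hx'.ne'
    rw [hd]
    field_simp
  rw [key x₁ h1, key x₂ h2]
  apply Finset.sum_le_sum
  intro w hw
  apply mul_le_mul_of_nonneg_right _ (Pr_nonneg' p hp _)
  apply hmono y w x₁ x₂ hx
  · rw [hswap w x₁]; exact mul_pos (hWpos w hw) h1
  · rw [hswap w x₂]; exact mul_pos (hWpos w hw) h2
end
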